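/- For each fixed natural number r ≥ 0, as n → ∞, sum_{k=1}^{n-1} (ln k)^r / (k(n-k)) is asymptotic to ((r+2)/(r+1)) * (ln n)^{r+1} / n. -/

import Mathlib

open Asymptotics Filter Finset Real

lemma pow_succ_sub_pow_succ_le {a b : ℝ} (ha : 0 ≤ a) (hab : a ≤ b) (r : ℕ) :
    b ^ (r+1) - a ^ (r+1) ≤ (r+1) * b ^ r * (b - a) := by
  rw [← geom_sum₂_mul b a (r+1)]
  have hb : 0 ≤ b := ha.trans hab
  have : ∑ i ∈ range (r+1), b ^ i * a ^ (r+1-1-i) ≤ (r+1) * b ^ r := by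
    calc ∑ i ∈ range (r+1), b ^ i * a ^ (r+1-1-i)
        ≤ ∑ i ∈ range (r+1), b ^ r := by
          apply Finset.sum_le_sum
          intro i hi
          simp only [Finset.mem_range] at hi
          have he : r+1-1-i = r-i := by omega
          rw [he]
          calc b ^ i * a ^ (r-i) ≤ b ^ i * b ^ (r - i) :=
                mul_le_mul_of_nonneg_left (pow_le_pow_left₀ ha hab _) (pow_nonneg hb i)
            _ = b ^ r := by rw [← pow_add]; congr 1; omega
      _ = (r+1) * b ^ r := by simp [mul_comm]
  nlinarith [pow_nonneg hb r, sub_nonneg.mpr hab]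

lemma le_pow_succ_sub_pow_succ {a b : ℝ} (ha : 0 ≤ a) (hab : a ≤ b) (r : ℕ) :
    (r+1) * a ^ r * (b - a) ≤ b ^ (r+1) - a ^ (r+1) := by
  rw [← geom_sum₂_mul b a (r+1)]
  have hb : 0 ≤ b := ha.trans hab
  have : (r+1) * a ^ r ≤ ∑ i ∈ range (r+1), b ^ i * a ^ (r+1-1-i) := by
    calc ((r:ℝ)+1) * a ^ r = ∑ i ∈ range (r+1), a ^ r := by simp [mul_comm]
      _ ≤ ∑ i ∈ range (r+1), b ^ i * a ^ (r+1-1-i) := by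
          apply Finset.sum_le_sum
          intro i hi
          simp only [Finset.mem_range] at hi
          calc a ^ r = a ^ i * a ^ (r - i) := by rw [← pow_add]; congr 1; omega
            _ ≤ b ^ i * a ^ (r+1-1-i) := by
                have he : r + 1 - 1 - i = r - i := by omega
                rw [he]
                exact mul_le_mul_of_nonneg_right (pow_le_pow_left₀ ha hab i) (pow_nonneg ha _)
  nlinarith [pow_nonneg ha r, sub_nonneg.mpr hab]

lemma pow_sub_pow_le_mul {a b : ℝ} (ha : 0 ≤ a) (hab : a ≤ b) (r : ℕ) :
    b ^ r - a ^ r ≤ r * b ^ (r-1) * (b - a) := by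
  cases r with
  | zero => simp
  | succ r => simpa using pow_succ_sub_pow_succ_le ha hab r

lemma sum_inv_sqrt_le (n : ℕ) : ∑ i ∈ range n, (1:ℝ) / Real.sqrt (i+1) ≤ 2 * Real.sqrt n := by
  induction n with
  | zero => simp
  | succ n ih =>
    rw [Finset.sum_range_succ]
    have h1 : Real.sqrt n ≤ Real.sqrt (n+1) := by
      apply Real.sqrt_le_sqrt; push_cast; linarith
    have h2 : (0:ℝ) < Real.sqrt (n+1) := by positivity
    have key : (1:ℝ) / Real.sqrt (n+1) ≤ 2 * (Real.sqrt (n+1) - Real.sqrt n) := by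
      have hmul : (Real.sqrt (n+1) - Real.sqrt n) * (Real.sqrt (n+1) + Real.sqrt n) = 1 := by
        have a : Real.sqrt (n+1) ^ 2 = (n:ℝ)+1 := Real.sq_sqrt (by positivity)
        have b : Real.sqrt n ^ 2 = (n:ℝ) := Real.sq_sqrt (by positivity)
        nlinarith
      have h3 : Real.sqrt (n+1) + Real.sqrt n ≤ 2 * Real.sqrt (n+1) := by linarith
      rw [div_le_iff₀ h2]
      nlinarith [Real.sqrt_nonneg n]
    push_cast at *
    linarith

-- log bounds
lemma log_succ_sub_le (k : ℕ) (hk : 1 ≤ k) :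
    Real.log (k+1) - Real.log k ≤ 1 / k := by
  have hk0 : (0:ℝ) < k := by exact_mod_cast hk
  rw [← Real.log_div (by positivity) (ne_of_gt hk0)]
  have := Real.log_le_sub_one_of_pos (x := ((k:ℝ)+1)/k) (by positivity)
  calc Real.log (((k:ℝ)+1)/k) ≤ ((k:ℝ)+1)/k - 1 := this
    _ = 1 / k := by field_simp; ring
lemma le_log_succ_sub (k : ℕ) (hk : 1 ≤ k) :
    1 / ((k:ℝ)+1) ≤ Real.log (k+1) - Real.log k := by
  have hk0 : (0:ℝ) < k := by exact_mod_cast hk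
  have h1 : Real.log k - Real.log (k+1) = Real.log ((k:ℝ)/(k+1)) := by
    rw [Real.log_div (ne_of_gt hk0) (by positivity)]
  have h2 := Real.log_le_sub_one_of_pos (x := (k:ℝ)/((k:ℝ)+1)) (by positivity)
  have h3 : (k:ℝ)/((k:ℝ)+1) - 1 = -(1/((k:ℝ)+1)) := by field_simp; ring
  linarith [h2.trans_eq h3, h1.symm.le, h1.le]

lemma tendsto_log_ratio : Tendsto (fun k : ℕ => Real.log (k+1) / Real.log k) atTop (nhds 1) := by
  have hlog : Tendsto (fun k : ℕ => Real.log k) atTop atTop :=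
    Real.tendsto_log_atTop.comp tendsto_natCast_atTop_atTop
  have h0 : Tendsto (fun k : ℕ => (Real.log (k+1) - Real.log k) / Real.log k) atTop (nhds 0) := by
    apply squeeze_zero_norm' _ tendsto_one_div_atTop_nhds_zero_nat
    filter_upwards [eventually_ge_atTop 3, hlog.eventually_ge_atTop 1] with k hk hlk
    have hk1 : (1:ℕ) ≤ k := by omega
    have h1 : Real.log (k+1) - Real.log k ≤ 1 / k := log_succ_sub_le k hk1
    have h2 : 0 ≤ Real.log (k+1) - Real.log k := by
      have := le_log_succ_sub k hk1
      have : (0:ℝ) < 1 / ((k:ℝ)+1) := by positivity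
      linarith [le_log_succ_sub k hk1]
    have hk0 : (0:ℝ) < k := by positivity
    rw [Real.norm_eq_abs, abs_of_nonneg (div_nonneg h2 (by linarith))]
    calc (Real.log (k+1) - Real.log k) / Real.log k ≤ (1/k) / Real.log k := by gcongr
      _ ≤ 1/k := div_le_self (by positivity) hlk
  have : Tendsto (fun k : ℕ => 1 + (Real.log (k+1) - Real.log k) / Real.log k) atTop (nhds 1) := by
    simpa using tendsto_const_nhds.add h0
  apply this.congr'
  filter_upwards [hlog.eventually_ge_atTop 1] with k hlk
  have : Real.log k ≠ 0 := by positivity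
  field_simp
  ring

-- reflection
lemma sum_reflect (g : ℕ → ℝ) (n : ℕ) :
    ∑ k ∈ Ioo 0 n, g (n - k) = ∑ k ∈ Ioo 0 n, g k := by
  apply Finset.sum_nbij' (fun k => n - k) (fun k => n - k)
  · intro a ha; simp only [Finset.mem_Ioo] at *; omega
  · intro a ha; simp only [Finset.mem_Ioo] at *; omega
  · intro a ha; simp only [Finset.mem_Ioo] at ha; omega
  · intro a ha; simp only [Finset.mem_Ioo] at ha; omega
  · intro a ha; rfl

lemma sumA (r : ℕ) :
    (fun n : ℕ => ∑ k ∈ Ioo 0 n, (Real.log k) ^ r / (k:ℝ)) ~[atTop]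
    (fun n : ℕ => (Real.log n) ^ (r+1) / ((r:ℝ)+1)) := by
  set u : ℕ → ℝ := fun k => (Real.log k) ^ r / (k:ℝ) with hu
  set v : ℕ → ℝ := fun k => ((Real.log (k+1)) ^ (r+1) - (Real.log k) ^ (r+1)) / ((r:ℝ)+1) with hv
  have hr1 : (0:ℝ) < (r:ℝ)+1 := by positivity
  have hlogmono : ∀ k : ℕ, Real.log k ≤ Real.log (k+1) := by
    intro k
    rcases Nat.eq_zero_or_pos k with h | h
    · subst h; simp
    · exact Real.log_le_log (by exact_mod_cast h) (by push_cast; linarith)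
  have hv0 : ∀ k, 0 ≤ v k := by
    intro k
    apply div_nonneg _ hr1.le
    have := pow_le_pow_left₀ (Real.log_natCast_nonneg k) (hlogmono k) (r+1)
    linarith
  have hsumv : ∀ n : ℕ, ∑ i ∈ range n, v i = (Real.log n) ^ (r+1) / ((r:ℝ)+1) := by
    intro n
    have h := Finset.sum_range_sub (fun k : ℕ => (Real.log k) ^ (r+1) / ((r:ℝ)+1)) n
    push_cast at h
    simp only [hv, sub_div]
    rw [h, Real.log_zero]
    simp
  have hlog : Tendsto (fun k : ℕ => Real.log k) atTop atTop :=
    Real.tendsto_log_atTop.comp tendsto_natCast_atTop_atTop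
  have htop : Tendsto (fun n => ∑ i ∈ range n, v i) atTop atTop := by
    simp only [hsumv]
    exact (((tendsto_pow_atTop (n := r+1) (by omega)).comp hlog).atTop_div_const hr1)
  -- ratio v/u → 1
  have hbounds : ∀ᶠ k : ℕ in atTop,
      (k:ℝ)/((k:ℝ)+1) ≤ v k / u k ∧ v k / u k ≤ (Real.log (k+1) / Real.log k) ^ r := by
    filter_upwards [eventually_ge_atTop 2] with k hk
    have hk0 : (0:ℝ) < k := by exact_mod_cast (by omega : 0 < k)
    have hlk : 0 < Real.log k := Real.log_pos (by exact_mod_cast (by omega : (1:ℕ) < k))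
    have hlk1 : 0 < Real.log (k+1) := by
      have := hlogmono k; linarith
    have hukpos : 0 < u k := by rw [hu]; positivity
    have hd1 : Real.log (k+1) - Real.log k ≤ 1 / k := log_succ_sub_le k (by omega)
    have hd2 : 1 / ((k:ℝ)+1) ≤ Real.log (k+1) - Real.log k := le_log_succ_sub k (by omega)
    have hub : v k ≤ (Real.log (k+1)) ^ r / k := by
      rw [hv]; beta_reduce
      rw [div_le_div_iff₀ hr1 hk0] at *
      have h1 := pow_succ_sub_pow_succ_le hlk.le (hlogmono k) r
      have h2 : ((r:ℝ)+1) * (Real.log (k+1)) ^ r * (Real.log (k+1) - Real.log k)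
          ≤ ((r:ℝ)+1) * (Real.log (k+1)) ^ r * (1/k) := by
        gcongr
      calc ((Real.log (k+1)) ^ (r+1) - (Real.log k) ^ (r+1)) * k
          ≤ ((r:ℝ)+1) * (Real.log (k+1)) ^ r * (1/k) * k := by nlinarith
        _ = (Real.log (k+1)) ^ r * ((r:ℝ)+1) := by field_simp
    have hlb : (Real.log k) ^ r / ((k:ℝ)+1) ≤ v k := by
      rw [hv]; beta_reduce
      rw [div_le_div_iff₀ (by positivity) hr1]
      have h1 := le_pow_succ_sub_pow_succ hlk.le (hlogmono k) r
      have h2 : ((r:ℝ)+1) * (Real.log k) ^ r * (1/((k:ℝ)+1))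
          ≤ ((r:ℝ)+1) * (Real.log k) ^ r * (Real.log (k+1) - Real.log k) := by
        gcongr
      calc (Real.log k) ^ r * ((r:ℝ)+1)
          = ((r:ℝ)+1) * (Real.log k) ^ r * (1/((k:ℝ)+1)) * ((k:ℝ)+1) := by field_simp
        _ ≤ ((Real.log (k+1)) ^ (r+1) - (Real.log k) ^ (r+1)) * ((k:ℝ)+1) := by nlinarith
    constructor
    · have : (Real.log k) ^ r / ((k:ℝ)+1) / u k = (k:ℝ)/((k:ℝ)+1) := by
        rw [hu]; field_simp
      rw [← this]
      gcongr
    · have : ((Real.log (k+1)) ^ r / k) / u k = (Real.log (k+1) / Real.log k) ^ r := by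
        rw [hu]; rw [div_pow]; field_simp
      rw [← this]
      gcongr
  have hlower : Tendsto (fun k : ℕ => (k:ℝ)/((k:ℝ)+1)) atTop (nhds 1) :=
    tendsto_natCast_div_add_atTop 1
  have hupper : Tendsto (fun k : ℕ => (Real.log (k+1) / Real.log k) ^ r) atTop (nhds 1) := by
    simpa using tendsto_log_ratio.pow r
  have hratio : Tendsto (fun k : ℕ => v k / u k) atTop (nhds 1) :=
    tendsto_of_tendsto_of_tendsto_of_le_of_le' hlower hupper
      (hbounds.mono fun k h => h.1) (hbounds.mono fun k h => h.2)
  have hu_ne : ∀ᶠ k : ℕ in atTop, u k ≠ 0 := by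
    filter_upwards [eventually_ge_atTop 2] with k hk
    have hk0 : (0:ℝ) < k := by exact_mod_cast (by omega : 0 < k)
    have hlk : 0 < Real.log k := Real.log_pos (by exact_mod_cast (by omega : (1:ℕ) < k))
    rw [hu]; positivity
  have hvu : v ~[atTop] u := (isEquivalent_iff_tendsto_one hu_ne).2 hratio
  have huv : u ~[atTop] v := hvu.symm
  have hsums : (fun n => ∑ i ∈ range n, u i) ~[atTop] (fun n => ∑ i ∈ range n, v i) := by
    have h := (huv.isLittleO).sum_range hv0 htop
    unfold Asymptotics.IsEquivalent
    apply h.congr' _ (by rfl)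
    filter_upwards with n
    simp [Finset.sum_sub_distrib]
  have e1 : (fun n : ℕ => ∑ k ∈ Ioo 0 n, (Real.log k) ^ r / (k:ℝ)) = fun n => ∑ i ∈ range n, u i := by
    funext n
    rw [hu]
    apply Finset.sum_subset
    · intro x hx; simp only [Finset.mem_Ioo, Finset.mem_range] at *; omega
    · intro x hx hnx
      simp only [Finset.mem_Ioo, Finset.mem_range] at *
      have : x = 0 := by omega
      subst this; simp
  have e2 : (fun n : ℕ => (Real.log n) ^ (r+1) / ((r:ℝ)+1)) = fun n => ∑ i ∈ range n, v i := by
    funext n; rw [hsumv]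
  rw [e1, e2]
  exact hsums

lemma sumH : (fun n : ℕ => ∑ k ∈ Ioo 0 n, 1/(k:ℝ)) ~[atTop] (fun n : ℕ => Real.log n) := by
  have h := sumA 0
  simp only [pow_zero, pow_one, one_div] at h
  simpa using h

lemma cast_sub_sum (n : ℕ) (g : ℕ → ℝ) (F : ℕ → ℝ) (hF : ∀ k ∈ Ioo 0 n, F k = g (n - k)) :
    ∑ k ∈ Ioo 0 n, F k = ∑ k ∈ Ioo 0 n, g k := by
  rw [Finset.sum_congr rfl hF, sum_reflect]

lemma hrefl_eq (n : ℕ) :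
    ∑ k ∈ Ioo 0 n, 1/((n:ℝ) - k) = ∑ k ∈ Ioo 0 n, 1/(k:ℝ) := by
  apply cast_sub_sum n (fun j => 1/(j:ℝ))
  intro k hk
  simp only [Finset.mem_Ioo] at hk
  rw [Nat.cast_sub hk.2.le]

lemma Lsum_le (n : ℕ) : ∑ k ∈ Ioo 0 n, (Real.log n - Real.log k) ≤ 4 * n := by
  have h1 : ∀ k ∈ Ioo 0 n, Real.log n - Real.log k ≤ 2 * Real.sqrt n * (1 / Real.sqrt k) := by
    intro k hk
    simp only [Finset.mem_Ioo] at hk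
    have hk0 : (0:ℝ) < k := by exact_mod_cast hk.1
    have hn0 : (0:ℝ) < n := by exact_mod_cast hk.1.trans hk.2
    have hd : Real.log n - Real.log k = Real.log ((n:ℝ)/k) := (Real.log_div hn0.ne' hk0.ne').symm
    have hs : Real.log ((n:ℝ)/k) = 2 * Real.log (Real.sqrt ((n:ℝ)/k)) := by
      rw [Real.log_sqrt (by positivity)]; ring
    have hle : Real.log (Real.sqrt ((n:ℝ)/k)) ≤ Real.sqrt ((n:ℝ)/k) - 1 :=
      Real.log_le_sub_one_of_pos (by positivity)
    have hsq : Real.sqrt ((n:ℝ)/k) = Real.sqrt n / Real.sqrt k := Real.sqrt_div hn0.le _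
    have he' : Real.sqrt n / Real.sqrt k = Real.sqrt n * (1/Real.sqrt k) := by ring
    rw [hsq, he'] at hle
    rw [hd, hs, hsq, he']
    linarith
  calc ∑ k ∈ Ioo 0 n, (Real.log n - Real.log k)
      ≤ ∑ k ∈ Ioo 0 n, 2 * Real.sqrt n * (1 / Real.sqrt k) := Finset.sum_le_sum h1
    _ = 2 * Real.sqrt n * ∑ k ∈ Ioo 0 n, (1 / Real.sqrt k) := by rw [Finset.mul_sum]
    _ ≤ 2 * Real.sqrt n * (2 * Real.sqrt n) := by
        have hs : ∑ k ∈ Ioo 0 n, (1:ℝ) / Real.sqrt k ≤ 2 * Real.sqrt n := by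
          rw [show Ioo 0 n = Ico (Nat.succ 0) n from (Finset.Ico_add_one_left_eq_Ioo 0 n).symm, Finset.sum_Ico_eq_sum_range]
          have hc : ∀ i : ℕ, ((Nat.succ 0 + i : ℕ):ℝ) = (i:ℝ) + 1 := by
            intro i; push_cast; ring
          simp only [hc]
          calc ∑ i ∈ range (n - Nat.succ 0), (1:ℝ) / Real.sqrt (i + 1)
              ≤ 2 * Real.sqrt (n - 1 : ℕ) := sum_inv_sqrt_le (n-1)
            _ ≤ 2 * Real.sqrt n := by
                gcongr; exact_mod_cast Nat.sub_le n 1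
        have h2 : (0:ℝ) ≤ 2 * Real.sqrt n := by positivity
        exact mul_le_mul_of_nonneg_left hs h2
    _ = 4 * (Real.sqrt n * Real.sqrt n) := by ring
    _ = 4 * n := by rw [Real.mul_self_sqrt (by positivity)]

lemma E_le (n : ℕ) (hn : 2 ≤ n) :
    ∑ k ∈ Ioo 0 n, (Real.log n - Real.log k)/((n:ℝ) - k)
      ≤ Real.log 2 * (∑ k ∈ Ioo 0 n, 1/(k:ℝ)) + 8 := by
  have hn0 : (0:ℝ) < n := by exact_mod_cast (by omega : 0 < n)
  have hrefl : ∑ k ∈ Ioo 0 n, (Real.log n - Real.log k)/((n:ℝ) - k)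
      = ∑ j ∈ Ioo 0 n, (Real.log n - Real.log (n - j : ℕ))/(j:ℝ) := by
    apply cast_sub_sum n (fun j => (Real.log n - Real.log (n - j : ℕ))/(j:ℝ))
    intro k hk
    simp only [Finset.mem_Ioo] at hk
    rw [Nat.sub_sub_self hk.2.le, Nat.cast_sub hk.2.le]
  rw [hrefl]
  have hterm : ∀ j ∈ Ioo 0 n, (Real.log n - Real.log (n - j : ℕ))/(j:ℝ)
      ≤ Real.log 2 * (1/(j:ℝ)) + (2/(n:ℝ)) * (Real.log n - Real.log (n - j : ℕ)) := by
    intro j hj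
    simp only [Finset.mem_Ioo] at hj
    have hj0 : (0:ℝ) < j := by exact_mod_cast hj.1
    have hnj1 : 1 ≤ n - j := by omega
    have hnj0 : (0:ℝ) < ((n - j : ℕ):ℝ) := by exact_mod_cast hnj1
    have hmono : Real.log (n - j : ℕ) ≤ Real.log n :=
      Real.log_le_log hnj0 (by exact_mod_cast Nat.sub_le n j)
    by_cases hc : 2 * j ≤ n
    · have hcast : (n:ℝ) ≤ 2 * ((n - j : ℕ):ℝ) := by
        have : n ≤ 2 * (n - j) := by omega
        exact_mod_cast this
      have hlog2 : Real.log n - Real.log (n - j : ℕ) ≤ Real.log 2 := by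
        rw [← Real.log_div hn0.ne' hnj0.ne']
        have hd2 : (n:ℝ) / ((n - j : ℕ):ℝ) ≤ 2 := by
          rw [div_le_iff₀ hnj0]; linarith
        exact Real.log_le_log (by positivity) hd2
      have h1 : (Real.log n - Real.log (n - j : ℕ))/(j:ℝ) ≤ Real.log 2 * (1/(j:ℝ)) := by
        rw [mul_one_div]
        gcongr
      have h2 : 0 ≤ (2/(n:ℝ)) * (Real.log n - Real.log (n - j : ℕ)) := by
        apply mul_nonneg (by positivity); linarith
      linarith
    · have hj2 : 1/(j:ℝ) ≤ 2/(n:ℝ) := by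
        rw [div_le_div_iff₀ hj0 hn0]
        have : n ≤ 2 * j := by omega
        have : (n:ℝ) ≤ 2 * j := by exact_mod_cast this
        linarith
      have h1 : (Real.log n - Real.log (n - j : ℕ))/(j:ℝ)
          ≤ (Real.log n - Real.log (n - j : ℕ)) * (2/(n:ℝ)) := by
        rw [div_eq_mul_one_div]
        apply mul_le_mul_of_nonneg_left hj2 (by linarith)
      have h2 : 0 ≤ Real.log 2 * (1/(j:ℝ)) := by
        apply mul_nonneg (Real.log_nonneg (by norm_num)) (by positivity)
      linarith [h1, h2, mul_comm (Real.log n - Real.log (n - j : ℕ)) (2/(n:ℝ))]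
  calc ∑ j ∈ Ioo 0 n, (Real.log n - Real.log (n - j : ℕ))/(j:ℝ)
      ≤ ∑ j ∈ Ioo 0 n, (Real.log 2 * (1/(j:ℝ)) + (2/(n:ℝ)) * (Real.log n - Real.log (n - j : ℕ))) :=
        Finset.sum_le_sum hterm
    _ = Real.log 2 * (∑ j ∈ Ioo 0 n, 1/(j:ℝ))
        + (2/(n:ℝ)) * ∑ j ∈ Ioo 0 n, (Real.log n - Real.log (n - j : ℕ)) := by
        rw [Finset.sum_add_distrib, Finset.mul_sum, Finset.mul_sum]
    _ ≤ Real.log 2 * (∑ j ∈ Ioo 0 n, 1/(j:ℝ)) + 8 := by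
        have hre : ∑ j ∈ Ioo 0 n, (Real.log n - Real.log (n - j : ℕ))
            = ∑ k ∈ Ioo 0 n, (Real.log n - Real.log k) :=
          sum_reflect (fun k => Real.log n - Real.log k) n
        rw [hre]
        have h4 := Lsum_le n
        have : (2/(n:ℝ)) * ∑ k ∈ Ioo 0 n, (Real.log n - Real.log k) ≤ (2/(n:ℝ)) * (4*n) := by
          apply mul_le_mul_of_nonneg_left h4 (by positivity)
        have he : (2/(n:ℝ)) * (4*n) = 8 := by field_simp; ring
        linarith

lemma sumB (r : ℕ) :
    (fun n : ℕ => ∑ k ∈ Ioo 0 n, (Real.log k) ^ r / ((n:ℝ) - k)) ~[atTop]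
    (fun n : ℕ => (Real.log n) ^ (r+1)) := by
  have hlogT : Tendsto (fun n : ℕ => Real.log n) atTop atTop :=
    Real.tendsto_log_atTop.comp tendsto_natCast_atTop_atTop
  rcases Nat.eq_zero_or_pos r with rfl | hr
  · simp only [pow_zero, zero_add, pow_one]
    have e : (fun n : ℕ => ∑ k ∈ Ioo 0 n, (1:ℝ) / ((n:ℝ) - k))
        = (fun n : ℕ => ∑ k ∈ Ioo 0 n, 1/(k:ℝ)) := funext hrefl_eq
    rw [e]
    exact sumH
  · set H : ℕ → ℝ := fun n => ∑ k ∈ Ioo 0 n, 1/(k:ℝ) with hHdef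
    set B : ℕ → ℝ := fun n => ∑ k ∈ Ioo 0 n, (Real.log k) ^ r / ((n:ℝ) - k) with hBdef
    set err : ℕ → ℝ := fun n => B n - (Real.log n) ^ r * H n with herrdef
    have herr : ∀ n : ℕ, 2 ≤ n →
        |err n| ≤ (r:ℝ) * (Real.log n) ^ (r-1) * (Real.log 2 * H n + 8) := by
      intro n hn
      have hexp : (Real.log n) ^ r * H n = ∑ k ∈ Ioo 0 n, (Real.log n) ^ r / ((n:ℝ) - k) := by
        rw [hHdef]
        simp only
        rw [← hrefl_eq n, Finset.mul_sum]
        exact Finset.sum_congr rfl fun k _ => (mul_one_div _ _)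
      have he : err n = ∑ k ∈ Ioo 0 n, ((Real.log k) ^ r - (Real.log n) ^ r)/((n:ℝ) - k) := by
        rw [herrdef]
        simp only
        rw [hexp, hBdef]
        simp only
        rw [← Finset.sum_sub_distrib]
        exact Finset.sum_congr rfl fun k _ => (div_sub_div_same _ _ _)
      rw [he]
      have hterm : ∀ k ∈ Ioo 0 n, |((Real.log k) ^ r - (Real.log n) ^ r)/((n:ℝ) - k)|
          ≤ (r:ℝ) * (Real.log n) ^ (r-1) * ((Real.log n - Real.log k)/((n:ℝ) - k)) := by
        intro k hk
        simp only [Finset.mem_Ioo] at hk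
        have hk0 : (0:ℝ) < k := by exact_mod_cast hk.1
        have hx : (0:ℝ) < (n:ℝ) - k := by
          have : (k:ℝ) < n := by exact_mod_cast hk.2
          linarith
        have hmono : Real.log k ≤ Real.log n :=
          Real.log_le_log hk0 (by exact_mod_cast hk.2.le)
        have hlk0 : 0 ≤ Real.log k := Real.log_natCast_nonneg k
        have habs : |((Real.log k) ^ r - (Real.log n) ^ r)/((n:ℝ) - k)|
            = ((Real.log n) ^ r - (Real.log k) ^ r)/((n:ℝ) - k) := by
          rw [abs_div, abs_of_pos hx, abs_of_nonpos (by nlinarith [pow_le_pow_left₀ hlk0 hmono r] : (Real.log k) ^ r - (Real.log n) ^ r ≤ 0), neg_sub]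
        rw [habs, ← mul_div_assoc]
        gcongr
        exact pow_sub_pow_le_mul hlk0 hmono r
      calc |∑ k ∈ Ioo 0 n, ((Real.log k) ^ r - (Real.log n) ^ r)/((n:ℝ) - k)|
          ≤ ∑ k ∈ Ioo 0 n, |((Real.log k) ^ r - (Real.log n) ^ r)/((n:ℝ) - k)| :=
            Finset.abs_sum_le_sum_abs _ _
        _ ≤ ∑ k ∈ Ioo 0 n, (r:ℝ) * (Real.log n) ^ (r-1) * ((Real.log n - Real.log k)/((n:ℝ) - k)) :=
            Finset.sum_le_sum hterm
        _ = (r:ℝ) * (Real.log n) ^ (r-1)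
            * ∑ k ∈ Ioo 0 n, (Real.log n - Real.log k)/((n:ℝ) - k) := by rw [← Finset.mul_sum]
        _ ≤ (r:ℝ) * (Real.log n) ^ (r-1) * (Real.log 2 * H n + 8) := by
            apply mul_le_mul_of_nonneg_left (E_le n hn)
            positivity
    have hlog_ne : ∀ᶠ n : ℕ in atTop, Real.log n ≠ 0 := by
      filter_upwards [hlogT.eventually_ge_atTop 1] with n h
      linarith
    have hHle : ∀ᶠ n : ℕ in atTop, H n ≤ 2 * Real.log n := by
      have hT := (isEquivalent_iff_tendsto_one hlog_ne).1 sumH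
      have h2 : ∀ᶠ n : ℕ in atTop,
          ((fun n : ℕ => ∑ k ∈ Ioo 0 n, 1/(k:ℝ)) / fun n : ℕ => Real.log n) n < 2 :=
        hT.eventually (gt_mem_nhds (by norm_num))
      filter_upwards [h2, hlogT.eventually_ge_atTop 1] with n hlt hl1
      simp only [Pi.div_apply] at hlt
      rw [div_lt_iff₀ (by linarith)] at hlt
      calc H n = ∑ k ∈ Ioo 0 n, 1/(k:ℝ) := rfl
        _ ≤ 2 * Real.log n := by linarith
    have hErrO : err =O[atTop] (fun n : ℕ => (Real.log n) ^ r) := by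
      apply IsBigO.of_bound ((r:ℝ) * (2 * Real.log 2 + 8))
      filter_upwards [eventually_ge_atTop 2, hHle, hlogT.eventually_ge_atTop 1] with n hn hle hl1
      have hHnn : 0 ≤ H n := by
        apply Finset.sum_nonneg; intro k _; positivity
      have hpow : (Real.log n) ^ (r-1) * Real.log n = (Real.log n) ^ r := by
        rw [← pow_succ]; congr 1; omega
      have hlog2 : (0:ℝ) ≤ Real.log 2 := Real.log_nonneg (by norm_num)
      have hb := herr n hn
      have hstep : Real.log 2 * H n + 8 ≤ (2 * Real.log 2 + 8) * Real.log n := by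
        have h8 : (8:ℝ) ≤ 8 * Real.log n := by linarith
        nlinarith
      have hpownn : (0:ℝ) ≤ (Real.log n) ^ (r-1) := by positivity
      calc ‖err n‖ = |err n| := rfl
        _ ≤ (r:ℝ) * (Real.log n) ^ (r-1) * (Real.log 2 * H n + 8) := hb
        _ ≤ (r:ℝ) * (Real.log n) ^ (r-1) * ((2 * Real.log 2 + 8) * Real.log n) := by
            apply mul_le_mul_of_nonneg_left hstep (by positivity)
        _ = (r:ℝ) * (2 * Real.log 2 + 8) * ((Real.log n) ^ (r-1) * Real.log n) := by ring
        _ = (r:ℝ) * (2 * Real.log 2 + 8) * (Real.log n) ^ r := by rw [hpow]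
        _ = (r:ℝ) * (2 * Real.log 2 + 8) * ‖(Real.log n) ^ r‖ := by
            rw [Real.norm_eq_abs, abs_of_nonneg (by positivity)]
    have hlo : (fun n : ℕ => (Real.log n) ^ r) =o[atTop] (fun n : ℕ => (Real.log n) ^ (r+1)) := by
      have := (isLittleO_pow_pow_atTop_of_lt (𝕜 := ℝ) (Nat.lt_succ_self r)).comp_tendsto hlogT
      exact this
    have herr_o : err =o[atTop] (fun n : ℕ => (Real.log n) ^ (r+1)) := hErrO.trans_isLittleO hlo
    have hmain : (fun n : ℕ => (Real.log n) ^ r * H n) ~[atTop]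
        (fun n : ℕ => (Real.log n) ^ (r+1)) := by
      have h1 := (IsEquivalent.refl (u := fun n : ℕ => (Real.log n) ^ r) (l := atTop)).mul sumH
      have e2 : (fun n : ℕ => (Real.log n) ^ r * Real.log n)
          = (fun n : ℕ => (Real.log n) ^ (r+1)) := by
        funext n; rw [pow_succ]
      have h2 : ((fun n : ℕ => (Real.log n) ^ r) * fun n : ℕ => Real.log n)
          = (fun n : ℕ => (Real.log n) ^ (r+1)) := by
        funext n; simp [pow_succ]
      rw [← h2]
      exact h1
    have hfinal := hmain.add_isLittleO herr_o
    have eB : ((fun n : ℕ => (Real.log n) ^ r * H n) + err) = B := by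
      funext n; simp only [Pi.add_apply, herrdef]; ring
    rw [eB] at hfinal
    exact hfinal

/-- For fixed `r`, `∑_{k=1}^{n-1} (ln k)^r/(k(n-k)) ~ ((r+2)/(r+1)) (ln n)^{r+1}/n`. -/
theorem sum_log_pow_asymptotic (r : ℕ) :
    (fun n : ℕ => ∑ k ∈ Finset.Ioo 0 n, (Real.log k) ^ r / ((k : ℝ) * ((n : ℝ) - (k : ℝ))))
      ~[atTop]
    (fun n : ℕ => ((r : ℝ) + 2) / ((r : ℝ) + 1) * (Real.log n) ^ (r + 1) / (n : ℝ)) := by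
  set A : ℕ → ℝ := fun n => ∑ k ∈ Ioo 0 n, (Real.log k) ^ r / (k:ℝ) with hAdef
  set B : ℕ → ℝ := fun n => ∑ k ∈ Ioo 0 n, (Real.log k) ^ r / ((n:ℝ) - k) with hBdef
  have hA := sumA r
  have hB := sumB r
  set g : ℕ → ℝ := fun n => (Real.log n) ^ (r+1) with hgdef
  set c : ℝ := ((r:ℝ) + 2) / ((r:ℝ) + 1) with hcdef
  have hr1 : (0:ℝ) < (r:ℝ) + 1 := by positivity
  have hr2 : (0:ℝ) < (r:ℝ) + 2 := by positivity
  have hc0 : 0 < c := by positivity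
  -- step: A + B ~ c * g
  have hAB : (fun n => A n + B n) ~[atTop] (fun n => c * g n) := by
    have h1 : (fun n => A n - g n / ((r:ℝ)+1)) =o[atTop] (fun n => c * g n) := by
      have := hA.isLittleO
      have hO : (fun n : ℕ => g n / ((r:ℝ)+1)) =O[atTop] (fun n => c * g n) := by
        apply IsBigO.of_bound (1/((r:ℝ)+2))
        filter_upwards with n
        have ha : ‖g n / ((r:ℝ)+1)‖ = |g n|/((r:ℝ)+1) := by
          rw [norm_div, Real.norm_eq_abs, Real.norm_eq_abs, abs_of_pos hr1]
        have hb : ‖c * g n‖ = c * |g n| := by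
          rw [Real.norm_eq_abs, abs_mul, abs_of_pos hc0]
        rw [ha, hb, hcdef]
        have he : (1/((r:ℝ)+2)) * (((r:ℝ)+2)/((r:ℝ)+1) * |g n|) = |g n|/((r:ℝ)+1) := by
          field_simp
        rw [he]
      exact (this.trans_isBigO hO).congr' (by filter_upwards with n; simp [Pi.sub_apply]; rfl) (by rfl)
    have h2 : (fun n => B n - g n) =o[atTop] (fun n => c * g n) := by
      have := hB.isLittleO
      have hO : g =O[atTop] (fun n => c * g n) := by
        apply IsBigO.of_bound (((r:ℝ)+1)/((r:ℝ)+2))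
        filter_upwards with n
        have hb : ‖c * g n‖ = c * |g n| := by
          rw [Real.norm_eq_abs, abs_mul, abs_of_pos hc0]
        rw [Real.norm_eq_abs, hb, hcdef]
        have he : ((r:ℝ)+1)/((r:ℝ)+2) * (((r:ℝ)+2)/((r:ℝ)+1) * |g n|) = |g n| := by
          field_simp
        rw [he]
      exact (this.trans_isBigO hO).congr' (by filter_upwards with n; simp [Pi.sub_apply]; rfl) (by rfl)
    have hsum := h1.add h2
    unfold Asymptotics.IsEquivalent
    apply hsum.congr' _ (by rfl)
    filter_upwards with n
    simp only [Pi.add_apply, Pi.sub_apply]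
    rw [hgdef, hcdef]
    field_simp
    ring
  -- step: S =ᶠ (1/n) * (A + B)
  have hS : (fun n : ℕ => ∑ k ∈ Ioo 0 n, (Real.log k) ^ r / ((k : ℝ) * ((n : ℝ) - (k : ℝ))))
      =ᶠ[atTop] (fun n : ℕ => (1/(n:ℝ)) * (A n + B n)) := by
    filter_upwards [eventually_ge_atTop 1] with n hn
    have hn0 : (0:ℝ) < n := by exact_mod_cast hn
    rw [hAdef, hBdef]
    simp only
    rw [← Finset.sum_add_distrib, Finset.mul_sum]
    apply Finset.sum_congr rfl
    intro k hk
    simp only [Finset.mem_Ioo] at hk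
    have hk0 : (0:ℝ) < k := by exact_mod_cast hk.1
    have hx : (0:ℝ) < (n:ℝ) - k := by
      have : (k:ℝ) < n := by exact_mod_cast hk.2
      linarith
    field_simp
    ring
  have hmul := (IsEquivalent.refl (u := fun n : ℕ => 1/(n:ℝ)) (l := atTop)).mul hAB
  have e2 : ((fun n : ℕ => 1/(n:ℝ)) * fun n => c * g n)
      = (fun n : ℕ => ((r : ℝ) + 2) / ((r : ℝ) + 1) * (Real.log n) ^ (r + 1) / (n : ℝ)) := by
    funext n
    simp only [Pi.mul_apply, hcdef, hgdef]
    ring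
  rw [e2] at hmul
  have e1 : ((fun n : ℕ => 1/(n:ℝ)) * fun n => A n + B n)
      = (fun n : ℕ => (1/(n:ℝ)) * (A n + B n)) := rfl
  rw [e1] at hmul
  exact hmul.congr_left hS.symm
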